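/- The number of equivalence classes of labelings of the path graph A_n under Reeder's moves equals ⌈n/2⌉ + 1. -/

import Mathlib

/-- Reeder's move `T_i`. -/
def move {V : Type} [Fintype V] [DecidableEq V] (D : SimpleGraph V) [DecidableRel D.Adj]
    (i : V) (a : V → ZMod 2) : V → ZMod 2 :=
  fun j => if j = i then a i + ∑ k ∈ D.neighborFinset i, a k else a j

/-- One step of Reeder's game: apply some move. -/
def reederStep {V : Type} [Fintype V] [DecidableEq V] (D : SimpleGraph V)
    [DecidableRel D.Adj] (a b : V → ZMod 2) : Prop :=
  ∃ i, b = move D i a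

/-- The path graph on `n` vertices. -/
def pathG (n : ℕ) : SimpleGraph (Fin n) where
  Adj i j := i.val + 1 = j.val ∨ j.val + 1 = i.val
  symm := ⟨by intro i j h; tauto⟩
  loopless := ⟨by intro i h; rcases h with h | h <;> omega⟩

instance (n : ℕ) : DecidableRel (pathG n).Adj :=
  fun i j => inferInstanceAs (Decidable (i.val + 1 = j.val ∨ j.val + 1 = i.val))

namespace ReederPath
lemma pathG_adj {n : ℕ} {i j : Fin n} :
    (pathG n).Adj i j ↔ (i.val + 1 = j.val ∨ j.val + 1 = i.val) := Iff.rfl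
def A (n : ℕ) (a : Fin n → ZMod 2) (j : ℕ) : ZMod 2 :=
  if h : j < n then a ⟨j, h⟩ else 0
def X (n : ℕ) (a : Fin n → ZMod 2) (k : ℕ) : ZMod 2 :=
  (if k = 0 then 0 else A n a (k - 1)) + A n a k
lemma zmod2_cases : ∀ x : ZMod 2, x = 0 ∨ x = 1 := by decide
lemma zmod2_val_le : ∀ x : ZMod 2, x.val ≤ 1 := by decide

lemma nbrSum (n : ℕ) (i : Fin n) (a : Fin n → ZMod 2) :
    ∑ k ∈ (pathG n).neighborFinset i, a k
      = (if i.val = 0 then 0 else A n a (i.val - 1)) + A n a (i.val + 1) := by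
  rcases Nat.eq_zero_or_pos i.val with h0 | h0
  · by_cases h1 : i.val + 1 < n
    · have hset : (pathG n).neighborFinset i = {⟨i.val + 1, h1⟩} := by
        ext k
        simp only [SimpleGraph.mem_neighborFinset, pathG_adj, Finset.mem_singleton, Fin.ext_iff]
        omega
      have h1' : (1 : ℕ) < n := by omega
      rw [hset, Finset.sum_singleton]
      simp [A, h0, h1']
    · have hset : (pathG n).neighborFinset i = ∅ := by
        ext k
        simp only [SimpleGraph.mem_neighborFinset, pathG_adj, Finset.notMem_empty, iff_false]
        omega
      have h1' : ¬ ((1:ℕ) < n) := by omega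
      rw [hset, Finset.sum_empty]
      simp [A, h0, h1']
  · have hne : i.val ≠ 0 := by omega
    have hlt : i.val - 1 < n := by omega
    by_cases h1 : i.val + 1 < n
    · have hset : (pathG n).neighborFinset i = {⟨i.val - 1, hlt⟩, ⟨i.val + 1, h1⟩} := by
        ext k
        simp only [SimpleGraph.mem_neighborFinset, pathG_adj, Finset.mem_insert,
          Finset.mem_singleton, Fin.ext_iff]
        omega
      rw [hset, Finset.sum_pair (by simp only [ne_eq, Fin.mk.injEq]; omega)]
      simp [A, hne, hlt, h1]
    · have hset : (pathG n).neighborFinset i = {⟨i.val - 1, hlt⟩} := by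
        ext k
        simp only [SimpleGraph.mem_neighborFinset, pathG_adj, Finset.mem_singleton, Fin.ext_iff]
        omega
      rw [hset, Finset.sum_singleton]
      simp [A, hne, hlt, h1]

lemma A_move (n : ℕ) (i : Fin n) (a : Fin n → ZMod 2) (j : ℕ) :
    A n (move (pathG n) i a) j =
      if j = i.val then
        A n a j + ((if i.val = 0 then 0 else A n a (i.val - 1)) + A n a (i.val + 1))
      else A n a j := by
  by_cases hj : j = i.val
  · rw [if_pos hj]
    have hjn : j < n := by rw [hj]; exact i.isLt
    unfold A
    rw [dif_pos hjn, dif_pos hjn]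
    show move (pathG n) i a ⟨j, hjn⟩ = _
    unfold move
    rw [if_pos (by simp [Fin.ext_iff, hj])]
    rw [nbrSum]
    congr 1
    exact congrArg a (Fin.ext hj.symm)
  · rw [if_neg hj]
    unfold A
    by_cases h : j < n
    · rw [dif_pos h, dif_pos h]
      show move (pathG n) i a ⟨j, h⟩ = a ⟨j, h⟩
      unfold move
      rw [if_neg (by simp only [Fin.ext_iff]; exact hj)]
    · rw [dif_neg h, dif_neg h]

lemma X_move (n : ℕ) (i : Fin n) (a : Fin n → ZMod 2) (k : ℕ) :
    X n (move (pathG n) i a) k = X n a (Equiv.swap i.val (i.val + 1) k) := by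
  have hmn : i.val < n := i.isLt
  by_cases hk1 : k = i.val
  · rw [hk1, Equiv.swap_apply_left]
    unfold X
    rw [if_neg (by omega : ¬ (i.val + 1 = 0))]
    simp only [Nat.add_sub_cancel]
    rw [A_move, A_move, if_pos rfl]
    by_cases h0 : i.val = 0
    · simp [h0]
    · rw [if_neg h0, if_neg (by omega : ¬ (i.val - 1 = i.val)), if_neg h0]
      generalize A n a (i.val - 1) = x
      generalize A n a i.val = y
      generalize A n a (i.val + 1) = z
      revert x y z
      decide
  · by_cases hk2 : k = i.val + 1
    · rw [hk2, Equiv.swap_apply_right]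
      unfold X
      rw [if_neg (by omega : ¬ (i.val + 1 = 0))]
      simp only [Nat.add_sub_cancel]
      rw [A_move, A_move, if_pos rfl, if_neg (by omega : ¬ (i.val + 1 = i.val))]
      generalize (if i.val = 0 then (0 : ZMod 2) else A n a (i.val - 1)) = p
      generalize A n a i.val = y
      generalize A n a (i.val + 1) = z
      revert p y z
      decide
    · rw [Equiv.swap_apply_of_ne_of_ne hk1 hk2]
      unfold X
      rw [A_move, A_move, if_neg (by omega : ¬ (k - 1 = i.val)), if_neg hk1]

def wt (n : ℕ) (a : Fin n → ZMod 2) : ℕ :=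
  ∑ k ∈ Finset.range (n + 1), (X n a k).val

def M (n : ℕ) (a : Fin n → ZMod 2) : ℕ :=
  ∑ k ∈ Finset.range (n + 1), (n - k) * (X n a k).val

def rep (n w : ℕ) : Fin n → ZMod 2 :=
  fun j => (((j.val + 1) - (n + 1 - w) : ℕ) : ZMod 2)

lemma swap_mem (n : ℕ) (i : Fin n) :
    ∀ k, k ∈ Finset.range (n + 1) ↔ Equiv.swap i.val (i.val + 1) k ∈ Finset.range (n + 1) := by
  intro k
  have := i.isLt
  simp only [Finset.mem_range, Equiv.swap_apply_def]
  split_ifs <;> omega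

lemma wt_move (n : ℕ) (i : Fin n) (a : Fin n → ZMod 2) :
    wt n (move (pathG n) i a) = wt n a := by
  unfold wt
  refine Finset.sum_equiv (Equiv.swap i.val (i.val + 1)) (swap_mem n i) ?_
  intro k _
  rw [X_move]

lemma M_move_lt (n : ℕ) (i : Fin n) (a : Fin n → ZMod 2)
    (h1 : X n a i.val = 1) (h0 : X n a (i.val + 1) = 0) :
    M n (move (pathG n) i a) < M n a := by
  have hmn : i.val < n := i.isLt
  have step1 : M n (move (pathG n) i a)
      = ∑ k ∈ Finset.range (n + 1), (n - Equiv.swap i.val (i.val + 1) k) * (X n a k).val := by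
    unfold M
    refine Finset.sum_equiv (Equiv.swap i.val (i.val + 1)) (swap_mem n i) ?_
    intro k _
    rw [X_move]
    congr 2
    rw [Equiv.swap_apply_self]
  rw [step1]
  unfold M
  refine Finset.sum_lt_sum ?_ ⟨i.val, Finset.mem_range.2 (by omega), ?_⟩
  · intro k _
    by_cases hk1 : k = i.val
    · subst hk1
      rw [Equiv.swap_apply_left]
      exact Nat.mul_le_mul_right _ (by omega)
    · by_cases hk2 : k = i.val + 1
      · subst hk2
        rw [h0]
        simp
      · rw [Equiv.swap_apply_of_ne_of_ne hk1 hk2]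
  · rw [Equiv.swap_apply_left, h1]
    show (n - (i.val + 1)) * (1 : ZMod 2).val < (n - i.val) * (1 : ZMod 2).val
    rw [ZMod.val_one]
    omega

lemma sum_X (n : ℕ) (a : Fin n → ZMod 2) (j : ℕ) :
    ∑ k ∈ Finset.range (j + 1), X n a k = A n a j := by
  induction j with
  | zero => simp [X]
  | succ j ih =>
    rw [Finset.sum_range_succ, ih]
    show A n a j + X n a (j + 1) = A n a (j + 1)
    unfold X
    rw [if_neg (by omega : ¬ (j + 1 = 0))]
    simp only [Nat.add_sub_cancel]
    generalize A n a j = x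
    generalize A n a (j + 1) = y
    revert x y
    decide

lemma wt_even (n : ℕ) (a : Fin n → ZMod 2) : 2 ∣ wt n a := by
  have h1 : ((wt n a : ℕ) : ZMod 2) = ∑ k ∈ Finset.range (n + 1), X n a k := by
    rw [wt, Nat.cast_sum]
    exact Finset.sum_congr rfl (fun k _ => ZMod.natCast_zmod_val _)
  rw [sum_X] at h1
  have h2 : A n a n = 0 := dif_neg (lt_irrefl n)
  rw [h2] at h1
  exact (ZMod.natCast_eq_zero_iff _ _).1 h1

lemma wt_le (n : ℕ) (a : Fin n → ZMod 2) : wt n a ≤ n + 1 := by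
  unfold wt
  calc ∑ k ∈ Finset.range (n + 1), (X n a k).val
      ≤ ∑ _k ∈ Finset.range (n + 1), 1 :=
        Finset.sum_le_sum (fun k _ => zmod2_val_le _)
    _ = n + 1 := by simp

lemma ind_nat_sum (t m : ℕ) :
    ∑ k ∈ Finset.range m, (if t ≤ k then 1 else 0 : ℕ) = m - t := by
  induction m with
  | zero => simp
  | succ m ih =>
    rw [Finset.sum_range_succ, ih]
    split_ifs with h <;> omega

lemma ind_zmod_sum (t m : ℕ) :
    ∑ k ∈ Finset.range m, (if t ≤ k then (1 : ZMod 2) else 0) = ((m - t : ℕ) : ZMod 2) := by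
  induction m with
  | zero => simp
  | succ m ih =>
    rw [Finset.sum_range_succ, ih]
    by_cases h : t ≤ m
    · rw [if_pos h, show m + 1 - t = (m - t) + 1 by omega]
      push_cast
      ring
    · rw [if_neg h, show m + 1 - t = 0 by omega, show m - t = 0 by omega, add_zero]

lemma sorted_eq_rep (n : ℕ) (a : Fin n → ZMod 2)
    (hs : ∀ k, k + 1 ≤ n → ¬(X n a k = 1 ∧ X n a (k + 1) = 0)) :
    a = rep n (wt n a) := by
  obtain ⟨t, ht, hX⟩ : ∃ t, t ≤ n + 1 ∧ ∀ k, k ≤ n → X n a k = if t ≤ k then 1 else 0 := by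
    by_cases hex : ∃ k, k ≤ n ∧ X n a k = 1
    · refine ⟨Nat.find hex, (Nat.find_spec hex).1.trans (by omega), ?_⟩
      have up : ∀ k, Nat.find hex ≤ k → k ≤ n → X n a k = 1 := by
        intro k hk
        induction k, hk using Nat.le_induction with
        | base => exact fun _ => (Nat.find_spec hex).2
        | succ k hk ih =>
          intro hkn
          have h1 : X n a k = 1 := ih (by omega)
          have hc := hs k hkn
          rcases zmod2_cases (X n a (k + 1)) with h | h
          · exact absurd ⟨h1, h⟩ hc
          · exact h
      intro k hk
      by_cases h : Nat.find hex ≤ k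
      · rw [if_pos h]; exact up k h hk
      · rw [if_neg h]
        have hmin := Nat.find_min hex (by omega : k < Nat.find hex)
        rcases zmod2_cases (X n a k) with h' | h'
        · exact h'
        · exact absurd ⟨hk, h'⟩ hmin
    · refine ⟨n + 1, le_refl _, ?_⟩
      intro k hk
      rw [if_neg (by omega : ¬ (n + 1 ≤ k))]
      rcases zmod2_cases (X n a k) with h' | h'
      · exact h'
      · exact absurd ⟨k, hk, h'⟩ hex
  have hwt : wt n a = (n + 1) - t := by
    unfold wt
    rw [← ind_nat_sum t (n + 1)]
    refine Finset.sum_congr rfl ?_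
    intro k hk
    rw [hX k (by simp only [Finset.mem_range] at hk; omega)]
    split_ifs <;> simp [ZMod.val_one]
  have htw : t = n + 1 - wt n a := by omega
  funext j
  have hj : j.val < n := j.isLt
  have ha : a j = ∑ k ∈ Finset.range (j.val + 1), X n a k := by
    rw [sum_X]
    unfold A
    rw [dif_pos hj]
  rw [ha]
  have hcongr : ∑ k ∈ Finset.range (j.val + 1), X n a k
      = ∑ k ∈ Finset.range (j.val + 1), (if t ≤ k then (1 : ZMod 2) else 0) := by
    refine Finset.sum_congr rfl ?_
    intro k hk
    exact hX k (by simp only [Finset.mem_range] at hk; omega)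
  rw [hcongr, ind_zmod_sum]
  unfold rep
  rw [← htw]

lemma to_rep (n : ℕ) (a : Fin n → ZMod 2) :
    Relation.EqvGen (reederStep (pathG n)) a (rep n (wt n a)) := by
  generalize hM : M n a = m
  induction m using Nat.strong_induction_on generalizing a with
  | _ m ih =>
    by_cases hs : ∀ k, k + 1 ≤ n → ¬(X n a k = 1 ∧ X n a (k + 1) = 0)
    · rw [← sorted_eq_rep n a hs]
      exact Relation.EqvGen.refl a
    · push_neg at hs
      obtain ⟨k, hk, h1, h0⟩ := hs
      have hkn : k < n := by omega
      have hstep : reederStep (pathG n) a (move (pathG n) ⟨k, hkn⟩ a) := ⟨⟨k, hkn⟩, rfl⟩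
      have hwt : wt n (move (pathG n) ⟨k, hkn⟩ a) = wt n a := wt_move n ⟨k, hkn⟩ a
      have hMlt : M n (move (pathG n) ⟨k, hkn⟩ a) < m := hM ▸ M_move_lt n ⟨k, hkn⟩ a h1 h0
      have hrec := ih (M n (move (pathG n) ⟨k, hkn⟩ a)) hMlt (move (pathG n) ⟨k, hkn⟩ a) rfl
      rw [hwt] at hrec
      exact Relation.EqvGen.trans _ _ _ (Relation.EqvGen.rel _ _ hstep) hrec

lemma A_rep (n w : ℕ) (hw : 2 ∣ w) (hwn : w ≤ n + 1) (j : ℕ) (hj : j ≤ n) :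
    A n (rep n w) j = (((j + 1) - (n + 1 - w) : ℕ) : ZMod 2) := by
  unfold A rep
  by_cases h : j < n
  · rw [dif_pos h]
  · rw [dif_neg h]
    have hjn : j = n := by omega
    rw [hjn, show n + 1 - (n + 1 - w) = w by omega]
    exact ((ZMod.natCast_eq_zero_iff _ _).2 hw).symm

lemma X_rep (n w : ℕ) (hw : 2 ∣ w) (hwn : w ≤ n + 1) (k : ℕ) (hk : k ≤ n) :
    X n (rep n w) k = if n + 1 - w ≤ k then 1 else 0 := by
  unfold X
  by_cases h0 : k = 0
  · subst h0
    rw [if_pos rfl, zero_add, A_rep n w hw hwn 0 (by omega)]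
    by_cases ht : n + 1 - w = 0
    · rw [if_pos (by omega), ht]
      norm_num
    · rw [if_neg (by omega), show 0 + 1 - (n + 1 - w) = 0 by omega]
      norm_num
  · rw [if_neg h0, A_rep n w hw hwn (k - 1) (by omega), A_rep n w hw hwn k hk,
      show k - 1 + 1 = k by omega]
    by_cases ht : n + 1 - w ≤ k
    · rw [if_pos ht, show k + 1 - (n + 1 - w) = (k - (n + 1 - w)) + 1 by omega]
      push_cast
      generalize ((k - (n + 1 - w) : ℕ) : ZMod 2) = x
      revert x
      decide
    · rw [if_neg ht, show k - (n + 1 - w) = 0 by omega,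
        show k + 1 - (n + 1 - w) = 0 by omega]
      norm_num

lemma wt_rep (n w : ℕ) (hw : 2 ∣ w) (hwn : w ≤ n + 1) : wt n (rep n w) = w := by
  unfold wt
  have hc : ∀ k ∈ Finset.range (n + 1),
      (X n (rep n w) k).val = (if n + 1 - w ≤ k then 1 else 0 : ℕ) := by
    intro k hk
    rw [X_rep n w hw hwn k (by simp only [Finset.mem_range] at hk; omega)]
    split_ifs <;> simp [ZMod.val_one]
  rw [Finset.sum_congr rfl hc, ind_nat_sum]
  omega

end ReederPath

open ReederPath in
/-- The number of equivalence classes of labelings of the path graph `A_n` under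
Reeder's moves equals `⌈n/2⌉ + 1`. -/
theorem pathG_card_classes (n : ℕ) :
    Nat.card (Quot (reederStep (pathG n))) = (n + 1) / 2 + 1 := by
  have hbound : ∀ a : Fin n → ZMod 2, wt n a / 2 < (n + 1) / 2 + 1 := by
    intro a
    have h1 := wt_le n a
    have h2 := Nat.div_le_div_right (c := 2) h1
    omega
  have hresp : ∀ a b, reederStep (pathG n) a b →
      (⟨wt n a / 2, hbound a⟩ : Fin ((n + 1) / 2 + 1)) = ⟨wt n b / 2, hbound b⟩ := by
    intro a b hab
    obtain ⟨i, rfl⟩ := hab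
    simp only [Fin.mk.injEq]
    rw [wt_move]
  have e : Quot (reederStep (pathG n)) ≃ Fin ((n + 1) / 2 + 1) :=
    { toFun := Quot.lift _ hresp
      invFun := fun m => Quot.mk _ (rep n (2 * m.val))
      left_inv := by
        refine Quot.ind ?_
        intro a
        show Quot.mk _ (rep n (2 * (wt n a / 2))) = Quot.mk _ a
        rw [Nat.mul_div_cancel' (wt_even n a)]
        exact (Quot.eqvGen_sound (to_rep n a)).symm
      right_inv := by
        intro m
        have hm : 2 * m.val ≤ n + 1 := by
          have h1 : m.val ≤ (n + 1) / 2 := by have := m.isLt; omega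
          have h2 : (n + 1) / 2 * 2 ≤ n + 1 := Nat.div_mul_le_self _ _
          omega
        refine Fin.ext ?_
        show wt n (rep n (2 * m.val)) / 2 = m.val
        rw [wt_rep n _ ⟨m.val, rfl⟩ hm]
        exact Nat.mul_div_cancel_left _ (by norm_num)
    }
  rw [Nat.card_congr e, Nat.card_eq_fintype_card, Fintype.card_fin]
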